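/- Suppose the 2n×2n symplectic matrices S_k(λ) (k = 0,…,N) each satisfy Ψ(S_k(λ)) ≥ 0 for all λ, and suppose Z₀(λ) is a differentiable symplectic family with Ψ(Z₀(λ)) ≥ 0 for all λ. Define recursively Z_{k+1}(λ) := S_k(λ) Z_k(λ). Then Ψ(Z_k(λ)) ≥ 0 for all λ and all k = 0,…,N+1. -/

import Mathlib

open Matrix
noncomputable section

/-- The standard symplectic matrix `J = [[0, I], [-I, 0]]`. -/
def Jmat (k : Type*) [Fintype k] [DecidableEq k] : Matrix (k ⊕ k) (k ⊕ k) ℝ :=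
  fromBlocks 0 1 (-1) 0

/-- A matrix `S` is symplectic if `Sᵀ J S = J`. -/
def IsSymplectic {k : Type*} [Fintype k] [DecidableEq k]
    (S : Matrix (k ⊕ k) (k ⊕ k) ℝ) : Prop :=
  Sᵀ * Jmat k * S = Jmat k

/-- `S'` is the (entrywise) derivative family of the matrix family `S`. -/
def HasMatDeriv {k m : Type*} (S S' : ℝ → Matrix k m ℝ) : Prop :=
  ∀ (l : ℝ) (i : k) (j : m), HasDerivAt (fun t => S t i j) (S' l i j) l

/-- `Ψ(S(λ)) = Jᵀ S'(λ) S(λ)⁻¹`, where `S'` is a derivative family of `S`. -/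
def Psi {k : Type*} [Fintype k] [DecidableEq k]
    (S S' : ℝ → Matrix (k ⊕ k) (k ⊕ k) ℝ) (l : ℝ) : Matrix (k ⊕ k) (k ⊕ k) ℝ :=
  (Jmat k)ᵀ * S' l * (S l)⁻¹

section Aux

variable {k : Type*} [Fintype k] [DecidableEq k]

lemma Jt_mul_J : (Jmat k)ᵀ * Jmat k = 1 := by
  simp [Jmat, fromBlocks_transpose, fromBlocks_multiply, ← fromBlocks_one]

lemma symp_left_inv {S : Matrix (k ⊕ k) (k ⊕ k) ℝ} (h : IsSymplectic S) :
    ((Jmat k)ᵀ * Sᵀ * Jmat k) * S = 1 := by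
  rw [Matrix.mul_assoc, Matrix.mul_assoc, ← Matrix.mul_assoc Sᵀ, h, Jt_mul_J]

lemma symp_inv_eq {S : Matrix (k ⊕ k) (k ⊕ k) ℝ} (h : IsSymplectic S) :
    S⁻¹ = (Jmat k)ᵀ * Sᵀ * Jmat k :=
  Matrix.inv_eq_left_inv (symp_left_inv h)

lemma symp_inv_mul {S : Matrix (k ⊕ k) (k ⊕ k) ℝ} (h : IsSymplectic S) :
    S⁻¹ * S = 1 := by
  rw [symp_inv_eq h]; exact symp_left_inv h

lemma symp_mul_inv {S : Matrix (k ⊕ k) (k ⊕ k) ℝ} (h : IsSymplectic S) :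
    S * S⁻¹ = 1 :=
  mul_eq_one_comm.mp (symp_inv_mul h)

lemma symp_mul {S Z : Matrix (k ⊕ k) (k ⊕ k) ℝ} (hS : IsSymplectic S)
    (hZ : IsSymplectic Z) : IsSymplectic (S * Z) := by
  unfold IsSymplectic at *
  rw [Matrix.transpose_mul]
  calc Zᵀ * Sᵀ * Jmat k * (S * Z) = Zᵀ * (Sᵀ * Jmat k * S) * Z := by
        simp only [Matrix.mul_assoc]
    _ = Jmat k := by rw [hS, hZ]

lemma symp_Jt_mul {S : Matrix (k ⊕ k) (k ⊕ k) ℝ} (h : IsSymplectic S) :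
    (Jmat k)ᵀ * S = (S⁻¹)ᵀ * (Jmat k)ᵀ := by
  have h1 : Sᵀ * Jmat k = Jmat k * S⁻¹ := by
    calc Sᵀ * Jmat k = Sᵀ * Jmat k * (S * S⁻¹) := by rw [symp_mul_inv h, Matrix.mul_one]
      _ = (Sᵀ * Jmat k * S) * S⁻¹ := by simp only [Matrix.mul_assoc]
      _ = Jmat k * S⁻¹ := by rw [h]
  calc (Jmat k)ᵀ * S = (Sᵀ * Jmat k)ᵀ := by rw [Matrix.transpose_mul, Matrix.transpose_transpose]
    _ = (Jmat k * S⁻¹)ᵀ := by rw [h1]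
    _ = (S⁻¹)ᵀ * (Jmat k)ᵀ := by rw [Matrix.transpose_mul]

/-- The key algebraic identity: `Ψ(SZ) = Ψ(S) + (S⁻¹)ᵀ Ψ(Z) S⁻¹`. -/
lemma psi_prod {S S' Z Z' : Matrix (k ⊕ k) (k ⊕ k) ℝ} (hS : IsSymplectic S)
    (hZ : IsSymplectic Z) :
    (Jmat k)ᵀ * (S' * Z + S * Z') * (S * Z)⁻¹ =
      (Jmat k)ᵀ * S' * S⁻¹ + (S⁻¹)ᵀ * ((Jmat k)ᵀ * Z' * Z⁻¹) * S⁻¹ := by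
  have hSZ : IsSymplectic (S * Z) := symp_mul hS hZ
  have hinv : (S * Z)⁻¹ = Z⁻¹ * S⁻¹ := by
    apply Matrix.inv_eq_left_inv
    calc Z⁻¹ * S⁻¹ * (S * Z) = Z⁻¹ * (S⁻¹ * S) * Z := by simp only [Matrix.mul_assoc]
      _ = 1 := by rw [symp_inv_mul hS, Matrix.mul_one, symp_inv_mul hZ]
  rw [hinv, Matrix.mul_add, Matrix.add_mul]
  congr 1
  · calc (Jmat k)ᵀ * (S' * Z) * (Z⁻¹ * S⁻¹)
        = (Jmat k)ᵀ * S' * (Z * Z⁻¹) * S⁻¹ := by simp only [Matrix.mul_assoc]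
      _ = (Jmat k)ᵀ * S' * S⁻¹ := by rw [symp_mul_inv hZ, Matrix.mul_one]
  · calc (Jmat k)ᵀ * (S * Z') * (Z⁻¹ * S⁻¹)
        = ((Jmat k)ᵀ * S) * Z' * Z⁻¹ * S⁻¹ := by simp only [Matrix.mul_assoc]
      _ = ((S⁻¹)ᵀ * (Jmat k)ᵀ) * Z' * Z⁻¹ * S⁻¹ := by rw [symp_Jt_mul hS]
      _ = (S⁻¹)ᵀ * ((Jmat k)ᵀ * Z' * Z⁻¹) * S⁻¹ := by simp only [Matrix.mul_assoc]

lemma psd_conj {P : Matrix (k ⊕ k) (k ⊕ k) ℝ} (hP : P.PosSemidef)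
    (B : Matrix (k ⊕ k) (k ⊕ k) ℝ) : (Bᵀ * P * B).PosSemidef := by
  have := hP.conjTranspose_mul_mul_same B
  rwa [conjTranspose_eq_transpose_of_trivial] at this

/-- Product rule for entrywise matrix derivatives. -/
lemma hasMatDeriv_mul {S S' Z Z' : ℝ → Matrix (k ⊕ k) (k ⊕ k) ℝ}
    (hS : HasMatDeriv S S') (hZ : HasMatDeriv Z Z') :
    HasMatDeriv (fun t => S t * Z t) (fun t => S' t * Z t + S t * Z' t) := by
  intro l i j
  have : HasDerivAt (fun t => ∑ m, S t i m * Z t m j)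
      (∑ m, (S' l i m * Z l m j + S l i m * Z' l m j)) l :=
    HasDerivAt.fun_sum fun m _ => (hS l i m).mul (hZ l m j)
  simpa [Matrix.mul_apply, Matrix.add_apply, Finset.sum_add_distrib] using this

end Aux

/-- if `Ψ(S_k(λ)) ≥ 0` for all `k, λ`, `Ψ(Z₀(λ)) ≥ 0`, and
`Z_{k+1}(λ) = S_k(λ) Z_k(λ)`, then `Ψ(Z_k(λ)) ≥ 0` for all `k = 0, …, N+1` and all `λ`. -/
theorem statement7 (n N : ℕ)
    (S S' : Fin (N + 1) → ℝ → Matrix (Fin n ⊕ Fin n) (Fin n ⊕ Fin n) ℝ)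
    (Z Z' : Fin (N + 2) → ℝ → Matrix (Fin n ⊕ Fin n) (Fin n ⊕ Fin n) ℝ)
    (hS : ∀ k l, IsSymplectic (S k l))
    (hdS : ∀ k, HasMatDeriv (S k) (S' k))
    (hSpos : ∀ k l, (Psi (S k) (S' k) l).PosSemidef)
    (hZ0 : ∀ l, IsSymplectic (Z 0 l))
    (hdZ : ∀ k, HasMatDeriv (Z k) (Z' k))
    (hZ0pos : ∀ l, (Psi (Z 0) (Z' 0) l).PosSemidef)
    (hrec : ∀ (k : Fin (N + 1)) (l : ℝ), Z k.succ l = S k l * Z k.castSucc l) :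
    ∀ (k : Fin (N + 2)) (l : ℝ), (Psi (Z k) (Z' k) l).PosSemidef := by
  -- every `Z k` is symplectic
  have hZsymp : ∀ (k : Fin (N + 2)) (l : ℝ), IsSymplectic (Z k l) := by
    refine Fin.induction hZ0 ?_
    intro k ih l
    rw [hrec k l]
    exact symp_mul (hS k l) (ih l)
  -- the given derivative family matches the product rule
  have hder : ∀ (k : Fin (N + 1)) (l : ℝ),
      Z' k.succ l = S' k l * Z k.castSucc l + S k l * Z' k.castSucc l := by
    intro k l
    ext i j
    have h1 : HasDerivAt (fun t => Z k.succ t i j) (Z' k.succ l i j) l := hdZ k.succ l i j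
    have h2 : HasDerivAt (fun t => Z k.succ t i j)
        ((S' k l * Z k.castSucc l + S k l * Z' k.castSucc l) i j) l := by
      have := hasMatDeriv_mul (hdS k) (hdZ k.castSucc) l i j
      apply this.congr_of_eventuallyEq
      filter_upwards with t
      rw [hrec k t]
    exact h1.unique h2
  refine Fin.induction hZ0pos ?_
  intro k ih l
  have key : Psi (Z k.succ) (Z' k.succ) l =
      Psi (S k) (S' k) l +
        ((S k l)⁻¹)ᵀ * Psi (Z k.castSucc) (Z' k.castSucc) l * (S k l)⁻¹ := by
    unfold Psi
    rw [hder k l, hrec k l]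
    exact psi_prod (hS k l) (hZsymp k.castSucc l)
  rw [key]
  exact (hSpos k l).add (psd_conj (ih l) _)
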